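/- If L ⊆ M_{n,ℓ,t} is a t-spread strongly stable set, then its t-spread shadow Shad_t(L) ⊆ M_{n,ℓ+1,t} is also a t-spread strongly stable set. -/

import Mathlib

open Multiset Finset

/-- A monomial in `K[x_1,…,x_n]` is encoded by the multiset of its variable
indices (each index lies in `[1, n]`).  `TSpread n d t u` says that `u` is a
t-spread monomial: its degree is at most `d`, its indices lie in `[1,n]`, and
consecutive indices `j_k ≤ j_{k+1}` of its sorted index list satisfy
`j_{k+1} - j_k ≥ t_k` (here `t 1 = t_1, …, t (d-1) = t_{d-1}`). -/
def TSpread (n d : ℕ) (t : ℕ → ℕ) (u : Multiset ℕ) : Prop :=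
  u.card ≤ d ∧ (∀ i ∈ u, 1 ≤ i ∧ i ≤ n) ∧
    ∀ k : ℕ, k + 1 < u.card →
      (u.sort (· ≤ ·)).getD k 0 + t (k + 1) ≤ (u.sort (· ≤ ·)).getD (k + 1) 0

/-- `Mset n d ℓ t` : the set `M_{n,ℓ,t}` of t-spread monomials of degree `ℓ`. -/
def Mset (n d ℓ : ℕ) (t : ℕ → ℕ) : Set (Multiset ℕ) :=
  {u | TSpread n d t u ∧ u.card = ℓ}

/-- the t-spread shadow `Shad_t(L) = {x_i w : w ∈ L, x_i w t-spread, i = 1..n}`. -/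
def Shad (n d : ℕ) (t : ℕ → ℕ) (L : Set (Multiset ℕ)) : Set (Multiset ℕ) :=
  {v | ∃ w ∈ L, ∃ i, 1 ≤ i ∧ i ≤ n ∧ v = i ::ₘ w ∧ TSpread n d t v}

/-- largest variable index dividing `u` (0 for the constant monomial). -/
def maxVar (u : Multiset ℕ) : ℕ := (u.sort (· ≤ ·)).getLastD 0

/-- `lexGE u v` : `u ≥_lex v` for monomials of equal degree, where the
lexicographic order is induced by `x_1 > x_2 > ⋯ > x_n`. -/
def lexGE (u v : Multiset ℕ) : Prop :=
  u = v ∨ List.Lex (· < ·) (u.sort (· ≤ ·)) (v.sort (· ≤ ·))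

/-- `L` is a t-spread strongly stable set. -/
def StronglyStableSet (n d : ℕ) (t : ℕ → ℕ) (L : Set (Multiset ℕ)) : Prop :=
  ∀ u ∈ L, ∀ i ∈ u, ∀ j : ℕ, 1 ≤ j → j < i →
    TSpread n d t (j ::ₘ u.erase i) → (j ::ₘ u.erase i) ∈ L

/-- `L` is a t-spread lex set (inside `M_{n,ℓ,t}`). -/
def LexSet (n d ℓ : ℕ) (t : ℕ → ℕ) (L : Set (Multiset ℕ)) : Prop :=
  ∀ u ∈ L, ∀ v ∈ Mset n d ℓ t, lexGE v u → v ∈ L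

/-- `m_i(L)` : number of monomials of `L` with largest variable index `i`. -/
noncomputable def mEq (i : ℕ) (L : Set (Multiset ℕ)) : ℕ :=
  {u ∈ L | maxVar u = i}.ncard

/-- `m_{≤ i}(L)` : number of monomials of `L` with largest variable index `≤ i`. -/
noncomputable def mLe (i : ℕ) (L : Set (Multiset ℕ)) : ℕ :=
  {u ∈ L | maxVar u ≤ i}.ncard

/-- `I` is (the set of monomials of) a monomial ideal of `K[x_1,…,x_n]`. -/
def MonIdeal (n : ℕ) (I : Set (Multiset ℕ)) : Prop :=
  (∀ u ∈ I, ∀ i ∈ u, 1 ≤ i ∧ i ≤ n) ∧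
    ∀ u ∈ I, ∀ i : ℕ, 1 ≤ i → i ≤ n → (i ::ₘ u) ∈ I

/-- `I` is generated by t-spread monomials. -/
def TSpreadGen (n d : ℕ) (t : ℕ → ℕ) (I : Set (Multiset ℕ)) : Prop :=
  ∀ u ∈ I, ∃ v ∈ I, TSpread n d t v ∧ v ≤ u

/-- The t-spread operator `a ↦ a^{(n,ℓ,t)}`:  if `a = Σ_{j=p}^{ℓ} C(a_j, j)` is
the Macaulay expansion of `a` with respect to `ℓ`, then
`tOp t_ℓ ℓ a = Σ_{j=p+1}^{ℓ+1} C(a_{j-1} + 1 - t_ℓ, j)`, computed greedily. -/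
noncomputable def tOp (s : ℕ) : ℕ → ℕ → ℕ
  | 0, _ => 0
  | ℓ + 1, a =>
    if a = 0 then 0
    else
      (sSup {b | Nat.choose b (ℓ + 1) ≤ a} + 1 - s).choose (ℓ + 2) +
        tOp s ℓ (a - Nat.choose (sSup {b | Nat.choose b (ℓ + 1) ≤ a}) (ℓ + 1))

/-- The graded Betti number `β_{i,j}(I)` of a t-spread strongly stable ideal,
via the Eliahou–Kervaire-type formula
`β_{i,i+q}(I) = Σ_{u ∈ G(I)_q} C(max(u) - 1 - Σ_{h=1}^{q-1} t_h, i)`. -/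
noncomputable def betti (t : ℕ → ℕ) (I : Set (Multiset ℕ)) (i j : ℕ) : ℕ :=
  ∑ᶠ u ∈ {u ∈ I | u.card = j - i ∧ ∀ v ∈ I, v ≤ u → v = u},
    (maxVar u - 1 - ∑ h ∈ Finset.Icc 1 (j - i - 1), t h).choose i

section Helpers

lemma sort_ne_nil {u : Multiset ℕ} (hu : u ≠ 0) : u.sort (· ≤ ·) ≠ [] := by
  intro h
  apply hu
  rw [← Multiset.sort_eq u (· ≤ ·), h]
  rfl

lemma maxVar_eq_getLast {u : Multiset ℕ} (hu : u ≠ 0) :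
    maxVar u = (u.sort (· ≤ ·)).getLast (sort_ne_nil hu) := by
  rw [maxVar, List.getLastD_eq_getLast?, List.getLast?_eq_getLast (sort_ne_nil hu)]
  rfl

lemma maxVar_mem {u : Multiset ℕ} (hu : u ≠ 0) : maxVar u ∈ u := by
  rw [maxVar_eq_getLast hu, ← Multiset.mem_sort (· ≤ ·)]
  exact List.getLast_mem _

lemma le_maxVar {u : Multiset ℕ} {x : ℕ} (hx : x ∈ u) : x ≤ maxVar u := by
  have hu : u ≠ 0 := by rintro rfl; simp at hx
  have hs : u.sort (· ≤ ·) ≠ [] := sort_ne_nil hu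
  rw [maxVar_eq_getLast hu]
  have hx' : x ∈ (u.sort (· ≤ ·)).dropLast ++ [(u.sort (· ≤ ·)).getLast hs] := by
    rw [List.dropLast_append_getLast hs, Multiset.mem_sort]
    exact hx
  have hp : ((u.sort (· ≤ ·)).dropLast ++ [(u.sort (· ≤ ·)).getLast hs]).Pairwise (· ≤ ·) := by
    rw [List.dropLast_append_getLast hs]
    exact Multiset.pairwise_sort _ _
  rcases List.mem_append.1 hx' with h1 | h2
  · exact (List.pairwise_append.1 hp).2.2 x h1 _ (List.mem_singleton_self _)
  · rw [List.mem_singleton] at h2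
    omega

lemma sort_erase_maxVar {u : Multiset ℕ} (hu : u ≠ 0) :
    (u.erase (maxVar u)).sort (· ≤ ·) = (u.sort (· ≤ ·)).dropLast := by
  have hs : u.sort (· ≤ ·) ≠ [] := sort_ne_nil hu
  have hdecomp : (u.sort (· ≤ ·)).dropLast ++ [(u.sort (· ≤ ·)).getLast hs] = u.sort (· ≤ ·) :=
    List.dropLast_append_getLast hs
  have hcoe : u.erase (maxVar u) = ↑(u.sort (· ≤ ·)).dropLast := by
    have hu' : u = maxVar u ::ₘ ↑(u.sort (· ≤ ·)).dropLast := by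
      conv_lhs => rw [← Multiset.sort_eq u (· ≤ ·), ← hdecomp]
      rw [maxVar_eq_getLast hu]
      rw [← Multiset.coe_add, add_comm, ← Multiset.singleton_add]
      rfl
    nth_rewrite 1 [hu']
    rw [Multiset.erase_cons_head]
  exact List.Perm.eq_of_pairwise'
    (Multiset.pairwise_sort _ _) (List.Pairwise.sublist (List.dropLast_sublist _) (Multiset.pairwise_sort u (· ≤ ·))) (Multiset.coe_eq_coe.1 (by rw [Multiset.sort_eq, hcoe]))

lemma tspread_erase_maxVar {n d : ℕ} {t : ℕ → ℕ} {u : Multiset ℕ}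
    (h : TSpread n d t u) : TSpread n d t (u.erase (maxVar u)) := by
  by_cases hu : u = 0
  · subst hu; simpa using h
  obtain ⟨h1, h2, h3⟩ := h
  refine ⟨le_trans Multiset.card_erase_le h1, fun i hi => h2 i (Multiset.mem_of_mem_erase hi), ?_⟩
  intro k hk
  have hcard : Multiset.card (u.erase (maxVar u)) = Multiset.card u - 1 :=
    Multiset.card_erase_of_mem (maxVar_mem hu)
  rw [hcard] at hk
  have hlen : (u.sort (· ≤ ·)).length = Multiset.card u := Multiset.length_sort _
  have hlend : (u.sort (· ≤ ·)).dropLast.length = Multiset.card u - 1 := by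
    rw [List.length_dropLast, hlen]
  rw [sort_erase_maxVar hu]
  have hk1 : k < (u.sort (· ≤ ·)).dropLast.length := by omega
  have hk2 : k + 1 < (u.sort (· ≤ ·)).dropLast.length := by omega
  rw [List.getD_eq_getElem _ _ hk1, List.getD_eq_getElem _ _ hk2,
    List.getElem_dropLast, List.getElem_dropLast,
    ← List.getD_eq_getElem (u.sort (· ≤ ·)) 0, ← List.getD_eq_getElem (u.sort (· ≤ ·)) 0]
  exact h3 k (by omega)

lemma shad_erase_max {n d : ℕ} {t : ℕ → ℕ} {L : Set (Multiset ℕ)}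
    (hss : StronglyStableSet n d t L) {v : Multiset ℕ} (hv : v ∈ Shad n d t L) :
    v.erase (maxVar v) ∈ L := by
  obtain ⟨w, hwL, i, hi1, hin, rfl, hTv⟩ := hv
  by_cases him : i = maxVar (i ::ₘ w)
  · rw [← him, Multiset.erase_cons_head]; exact hwL
  · have hmem : maxVar (i ::ₘ w) ∈ i ::ₘ w := maxVar_mem (by simp)
    have hmw : maxVar (i ::ₘ w) ∈ w := by
      rcases Multiset.mem_cons.1 hmem with h | h
      · exact absurd h.symm him
      · exact h
    have hlt : i < maxVar (i ::ₘ w) :=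
      lt_of_le_of_ne (le_maxVar (Multiset.mem_cons_self _ _)) him
    have hts : TSpread n d t (i ::ₘ w.erase (maxVar (i ::ₘ w))) := by
      have := tspread_erase_maxVar hTv
      rwa [Multiset.erase_cons_tail _ (Ne.symm (fun h => him h.symm))] at this
    have := hss w hwL _ hmw i hi1 hlt hts
    rwa [Multiset.erase_cons_tail _ (Ne.symm (fun h => him h.symm))]

lemma mem_shad {n d : ℕ} {t : ℕ → ℕ} {L : Set (Multiset ℕ)} {v : Multiset ℕ}
    (hv : TSpread n d t v) (hne : v ≠ 0) (hL : v.erase (maxVar v) ∈ L) :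
    v ∈ Shad n d t L :=
  ⟨_, hL, maxVar v, (hv.2.1 _ (maxVar_mem hne)).1, (hv.2.1 _ (maxVar_mem hne)).2,
    (Multiset.cons_erase (maxVar_mem hne)).symm, hv⟩

end Helpers

/-- the t-spread shadow of a t-spread strongly stable set
`L ⊆ M_{n,ℓ,t}` is a t-spread strongly stable subset of `M_{n,ℓ+1,t}`. -/
theorem stmt2 (n d ℓ : ℕ) (t : ℕ → ℕ) (hd : 2 ≤ d) (hℓ : ℓ ≤ d)
    (L : Set (Multiset ℕ)) (hLM : L ⊆ Mset n d ℓ t)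
    (hss : StronglyStableSet n d t L) :
    Shad n d t L ⊆ Mset n d (ℓ + 1) t ∧
      StronglyStableSet n d t (Shad n d t L) := by
  have hsub : Shad n d t L ⊆ Mset n d (ℓ + 1) t := by
    rintro v ⟨w, hwL, i, hi1, hin, rfl, hTv⟩
    exact ⟨hTv, by simp [(hLM hwL).2]⟩
  refine ⟨hsub, ?_⟩
  intro v hv a ha j hj1 hja hT'
  have hvne : v ≠ 0 := by rintro rfl; simp at ha
  have hw0 : v.erase (maxVar v) ∈ L := shad_erase_max hss hv
  have hv'ne : (j ::ₘ v.erase a) ≠ 0 := Multiset.cons_ne_zero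
  have ham : a ≤ maxVar v := le_maxVar ha
  apply mem_shad hT' hv'ne
  by_cases hca : a = maxVar v
  · by_cases hjm : j = maxVar (j ::ₘ v.erase a)
    · rw [← hjm, Multiset.erase_cons_head, hca]; exact hw0
    · have hmem' : maxVar (j ::ₘ v.erase a) ∈ j ::ₘ v.erase a := maxVar_mem hv'ne
      have hmw : maxVar (j ::ₘ v.erase a) ∈ v.erase a := by
        rcases Multiset.mem_cons.1 hmem' with h | h
        · exact absurd h.symm hjm
        · exact h
      have hjlt : j < maxVar (j ::ₘ v.erase a) :=
        lt_of_le_of_ne (le_maxVar (Multiset.mem_cons_self _ _)) hjm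
      have hts := tspread_erase_maxVar hT'
      rw [Multiset.erase_cons_tail _ hjm] at hts ⊢
      rw [hca] at hmw hjlt hts ⊢
      exact hss _ hw0 _ hmw j hj1 hjlt hts
  · have halt : a < maxVar v := lt_of_le_of_ne ham hca
    have hmv' : maxVar v ∈ v.erase a :=
      (Multiset.mem_erase_of_ne (fun h => hca h.symm)).2 (maxVar_mem hvne)
    have hm'eq : maxVar (j ::ₘ v.erase a) = maxVar v := by
      apply le_antisymm
      · rcases Multiset.mem_cons.1 (maxVar_mem hv'ne) with h | h
        · rw [h]; omega
        · exact le_maxVar (Multiset.mem_of_mem_erase h)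
      · exact le_maxVar (Multiset.mem_cons_of_mem hmv')
    have hja' : a ∈ v.erase (maxVar v) :=
      (Multiset.mem_erase_of_ne hca).2 ha
    have hjne : j ≠ maxVar v := by omega
    have hts := tspread_erase_maxVar hT'
    rw [hm'eq, Multiset.erase_cons_tail _ hjne, Multiset.erase_comm] at hts ⊢
    exact hss _ hw0 a hja' j hj1 hja hts
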